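/- Any digraph G' with at least one directed cycle but no isolated cycles satisfies |V'| + |E'| ≥ 9, and the directed 3-clique D_3 (3 vertices with both arcs between every pair, so |V|=3, |E|=6) attains this bound; moreover D_3 has no isolated cycle, i.e., every elementary cycle of D_3 meets some other elementary cycle not sharing a common arc with it in the sense of the definition. -/

import Mathlib

/-- A directed cycle of a digraph given by `tail`/`head` maps. -/
def IsCycle {V E : Type*} (tail head : E → V) {n : ℕ} (c : Fin (n + 1) → E) : Prop :=
  ∀ i, head (c i) = tail (c (i + 1))

/-- An elementary cycle: a directed cycle visiting each vertex it contains exactly once. -/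
def IsElemCycle {V E : Type*} (tail head : E → V) {n : ℕ} (c : Fin (n + 1) → E) : Prop :=
  IsCycle tail head c ∧ Function.Injective (fun i => tail (c i))

/-- `e` is an isolating arc of the elementary cycle `c`: `e` lies on `c` and `c` is
arc-disjoint from every elementary cycle containing neither `e` nor an arc parallel
to `e`. -/
def IsolatingArc {V E : Type*} (tail head : E → V) {n : ℕ} (c : Fin (n + 1) → E)
    (e : E) : Prop :=
  e ∈ Set.range c ∧
    ∀ (m : ℕ) (c' : Fin (m + 1) → E), IsElemCycle tail head c' →
      (∀ i, ¬ (tail (c' i) = tail e ∧ head (c' i) = head e)) →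
      Disjoint (Set.range c) (Set.range c')

/-- A graph has an isolated cycle iff some elementary cycle has an isolating arc. -/
def HasIsolatedCycle {V E : Type*} (tail head : E → V) : Prop :=
  ∃ (n : ℕ) (c : Fin (n + 1) → E), IsElemCycle tail head c ∧ ∃ e, IsolatingArc tail head c e

open Fin.NatCast Fin.CommRing

section Aux
variable {V E : Type*} {tail head : E → V}

lemma elem_inj {n : ℕ} {c : Fin (n+1) → E} (h : IsElemCycle tail head c) :
    Function.Injective c := fun i j hij => h.2 (show tail (c i) = tail (c j) by rw [hij])

lemma elem_card_le [Fintype V] {n : ℕ} {c : Fin (n+1) → E} (h : IsElemCycle tail head c) :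
    n + 1 ≤ Fintype.card V := by
  simpa using Fintype.card_le_of_injective _ h.2

lemma step_lemma {a b : ℕ} {c : Fin (a+1) → E} {c' : Fin (b+1) → E}
    (hc : IsElemCycle tail head c) (hc' : IsCycle tail head c')
    {i : Fin (a+1)} {j : Fin (b+1)} (hij : c' j = c i)
    (hmem : c' (j+1) ∈ Set.range c) : c' (j+1) = c (i+1) := by
  obtain ⟨k, hk⟩ := hmem
  have h1 := hc' j
  have h2 := hc.1 i
  rw [hij] at h1
  have : tail (c k) = tail (c (i+1)) := by rw [hk, ← h1, h2]
  have hk2 : k = i + 1 := hc.2 this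
  rw [← hk, hk2]

lemma rot_lemma {a b : ℕ} {c : Fin (a+1) → E} {c' : Fin (b+1) → E}
    (hc : IsElemCycle tail head c) (hc' : IsCycle tail head c')
    (hsub : Set.range c' ⊆ Set.range c) : Set.range c ⊆ Set.range c' := by
  obtain ⟨i0, hi0⟩ := hsub ⟨0, rfl⟩
  have key : ∀ k : ℕ, c' ((0 : Fin (b+1)) + (k : Fin (b+1))) = c (i0 + (k : Fin (a+1))) := by
    intro k
    induction k with
    | zero => simpa using hi0.symm
    | succ k ih =>
      have h1 : ((k+1 : ℕ) : Fin (b+1)) = (k : Fin (b+1)) + 1 := by push_cast; ring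
      have h2 : ((k+1 : ℕ) : Fin (a+1)) = (k : Fin (a+1)) + 1 := by push_cast; ring
      rw [h1, h2, ← add_assoc, ← add_assoc]
      exact step_lemma hc hc' ih (hsub ⟨_, rfl⟩)
  rintro x ⟨m, rfl⟩
  refine ⟨(0 : Fin (b+1)) + (((m - i0 : Fin (a+1)).val : ℕ) : Fin (b+1)), ?_⟩
  rw [key]
  congr 1
  rw [Fin.cast_val_eq_self]
  exact add_sub_cancel i0 m

lemma get_witness (hni : ¬ HasIsolatedCycle tail head) {n : ℕ} {c : Fin (n+1) → E}
    (hc : IsElemCycle tail head c) (i : Fin (n+1)) :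
    ∃ (m : ℕ) (c' : Fin (m+1) → E), IsElemCycle tail head c' ∧
      (∀ k, ¬ (tail (c' k) = tail (c i) ∧ head (c' k) = head (c i))) ∧
      ∃ (j : Fin (m+1)) (l : Fin (n+1)), c' j = c l := by
  by_contra h
  push_neg at h
  apply hni
  refine ⟨n, c, hc, c i, ⟨i, rfl⟩, ?_⟩
  intro m c' he ha
  rw [Set.disjoint_right]
  rintro x ⟨j, rfl⟩ ⟨l, hl⟩
  exact h m c' he (fun k hk1 hk2 => ha k ⟨hk1, hk2⟩) j l hl.symm

lemma loop_isolated {c : Fin 1 → E} (hc : IsElemCycle tail head c) :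
    HasIsolatedCycle tail head := by
  refine ⟨0, c, hc, c 0, ⟨0, rfl⟩, ?_⟩
  intro m c' he ha
  rw [Set.disjoint_left]
  rintro x ⟨l, rfl⟩ ⟨j, hj⟩
  have hl : l = 0 := Fin.fin_one_eq_zero l
  rw [hl] at hj
  exact ha j ⟨by rw [hj], by rw [hj]⟩

end Aux

section Helpers
variable {α : Type*}

lemma card5_le [Fintype α] {a b x y z : α}
    (hab : a ≠ b) (hax : a ≠ x) (hay : a ≠ y) (haz : a ≠ z)
    (hbx : b ≠ x) (hby : b ≠ y) (hbz : b ≠ z)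
    (hxy : x ≠ y) (hxz : x ≠ z) (hyz : y ≠ z) : 5 ≤ Fintype.card α := by
  classical
  have h : ({a, b, x, y, z} : Finset α).card = 5 := by
    rw [Finset.card_insert_of_notMem (by simp [*]),
        Finset.card_insert_of_notMem (by simp [*]),
        Finset.card_insert_of_notMem (by simp [*]),
        Finset.card_insert_of_notMem (by simp [*]),
        Finset.card_singleton]
  calc 5 = ({a, b, x, y, z} : Finset α).card := h.symm
    _ ≤ Fintype.card α := Finset.card_le_univ _

lemma card6_le [Fintype α] {a b x y z w : α}
    (hab : a ≠ b) (hax : a ≠ x) (hay : a ≠ y) (haz : a ≠ z) (haw : a ≠ w)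
    (hbx : b ≠ x) (hby : b ≠ y) (hbz : b ≠ z) (hbw : b ≠ w)
    (hxy : x ≠ y) (hxz : x ≠ z) (hxw : x ≠ w)
    (hyz : y ≠ z) (hyw : y ≠ w) (hzw : z ≠ w) : 6 ≤ Fintype.card α := by
  classical
  have h : ({a, b, x, y, z, w} : Finset α).card = 6 := by
    rw [Finset.card_insert_of_notMem (by simp [*]),
        Finset.card_insert_of_notMem (by simp [*]),
        Finset.card_insert_of_notMem (by simp [*]),
        Finset.card_insert_of_notMem (by simp [*]),
        Finset.card_insert_of_notMem (by simp [*]),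
        Finset.card_singleton]
  calc 6 = ({a, b, x, y, z, w} : Finset α).card := h.symm
    _ ≤ Fintype.card α := Finset.card_le_univ _

lemma fin_shift_ne {N : ℕ} (j : Fin (N + 1)) {x y : ℕ} (hx : x < N + 1) (hy : y < N + 1)
    (hxy : x ≠ y) : j + (x : Fin (N + 1)) ≠ j + (y : Fin (N + 1)) := by
  intro h
  have h2 := add_left_cancel h
  rw [Fin.ext_iff, Fin.val_cast_of_lt hx, Fin.val_cast_of_lt hy] at h2
  exact hxy h2

lemma fin_succ_cast {N : ℕ} (j : Fin (N + 1)) (x : ℕ) :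
    j + (x : Fin (N + 1)) + 1 = j + ((x + 1 : ℕ) : Fin (N + 1)) := by
  rw [add_assoc]
  congr 1
  push_cast
  ring

end Helpers

section Main
variable {V E : Type*} {tail head : E → V}

/-- Structure of a length-3 witness cycle for a 2-cycle. -/
lemma L2_small {c : Fin 2 → E} (hc : IsElemCycle tail head c)
    {d : Fin 3 → E} (hd : IsElemCycle tail head d) {i : Fin 2} {j : Fin 3}
    (hj : d j = c (i + 1)) :
    ∃ a b w, tail a = tail (c i) ∧ head a = w ∧ tail b = w ∧ head b = tail (c (i + 1)) ∧
      w ≠ tail (c i) ∧ w ≠ tail (c (i + 1)) := by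
  refine ⟨d (j + 1), d (j + 2), tail (d (j + 2)), ?_, ?_, rfl, ?_, ?_, ?_⟩
  · -- tail (d (j+1)) = tail (c i)
    have h1 := hd.1 j
    rw [hj] at h1
    have h2 := hc.1 (i + 1)
    rw [show i + 1 + 1 = i from by
      have : ∀ i : Fin 2, i + 1 + 1 = i := by decide
      exact this i] at h2
    rw [← h1, h2]
  · -- head (d (j+1)) = tail (d (j+2))
    have h1 := hd.1 (j + 1)
    rw [show j + 1 + 1 = j + 2 from by
      have : ∀ j : Fin 3, j + 1 + 1 = j + 2 := by decide
      exact this j] at h1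
    exact h1
  · -- head (d (j+2)) = tail (c (i+1))
    have h1 := hd.1 (j + 2)
    rw [show j + 2 + 1 = j from by
      have : ∀ j : Fin 3, j + 2 + 1 = j := by decide
      exact this j] at h1
    rw [h1, hj]
  · -- tail (d (j+2)) ≠ tail (c i)
    intro h
    -- tail (c i) = tail (d (j+1)) from first bullet; injectivity of tails of d
    have h1 := hd.1 j
    rw [hj] at h1
    have h2 := hc.1 (i + 1)
    rw [show i + 1 + 1 = i from by
      have : ∀ i : Fin 2, i + 1 + 1 = i := by decide
      exact this i] at h2
    have h3 : tail (d (j + 2)) = tail (d (j + 1)) := by rw [h, ← h2, h1]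
    have := hd.2 h3
    have hne : j + 2 ≠ j + 1 := by
      have : ∀ j : Fin 3, j + 2 ≠ j + 1 := by decide
      exact this j
    exact hne this
  · -- tail (d (j+2)) ≠ tail (c (i+1))
    intro h
    have h3 : tail (d (j + 2)) = tail (d j) := by rw [h, hj]
    have := hd.2 h3
    have hne : j + 2 ≠ j := by
      have : ∀ j : Fin 3, j + 2 ≠ j := by decide
      exact this j
    exact hne this

/-- A long (length ≥ 4) witness cycle for a 2-cycle forces at least 5 arcs. -/
lemma L2_big [Fintype E] {c : Fin 2 → E} (hc : IsElemCycle tail head c)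
    {m : ℕ} {d : Fin (m + 4) → E} (hd : IsElemCycle tail head d) {i : Fin 2} {j : Fin (m + 4)}
    (had : ∀ k, ¬ (tail (d k) = tail (c i) ∧ head (d k) = head (c i)))
    (hj : d j = c (i + 1)) : 5 ≤ Fintype.card E := by
  have m4 : m + 4 = (m + 3) + 1 := by omega
  have hdinj := elem_inj hd
  have hcinj := elem_inj hc
  -- index distinctness facts
  have idx : ∀ x y : ℕ, x < m + 4 → y < m + 4 → x ≠ y →
      j + (x : Fin (m + 4)) ≠ j + (y : Fin (m + 4)) := by
    intro x y hx hy hxy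
    rw [m4] at *
    exact fin_shift_ne _ (by omega) (by omega) hxy
  have hj0 : j + ((0 : ℕ) : Fin (m + 4)) = j := by
    norm_num
  have key : ∀ x : ℕ, 0 < x → x < m + 4 → d (j + (x : Fin (m + 4))) ≠ c i ∧
      d (j + (x : Fin (m + 4))) ≠ c (i + 1) := by
    intro x hx0 hx
    constructor
    · intro h
      exact had _ ⟨by rw [h], by rw [h]⟩
    · intro h
      rw [← hj] at h
      have h2 : j + (x : Fin (m + 4)) = j + ((0 : ℕ) : Fin (m + 4)) := by
        rw [hj0]; exact hdinj h
      exact idx x 0 hx (by omega) (by omega) h2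
  have hAB : c i ≠ c (i + 1) := by
    intro h
    have := hcinj h
    have : ∀ i : Fin 2, i ≠ i + 1 := by decide
    exact this i (by assumption)
  have hd1 := key 1 (by omega) (by omega)
  have hd2 := key 2 (by omega) (by omega)
  have hd3 := key 3 (by omega) (by omega)
  have dne : ∀ x y : ℕ, x < m + 4 → y < m + 4 → x ≠ y →
      d (j + (x : Fin (m + 4))) ≠ d (j + (y : Fin (m + 4))) := by
    intro x y hx hy hxy h
    exact idx x y hx hy hxy (hdinj h)
  exact card5_le hAB hd1.1.symm hd2.1.symm hd3.1.symm
    hd1.2.symm hd2.2.symm hd3.2.symm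
    (dne 1 2 (by omega) (by omega) (by omega))
    (dne 1 3 (by omega) (by omega) (by omega))
    (dne 2 3 (by omega) (by omega) (by omega))

end Main

section MainL3
variable {V E : Type*} {tail head : E → V}

lemma all_eq_of_card3 [Fintype V] (hcard : Fintype.card V = 3) {t0 t1 t2 : V}
    (h01 : t0 ≠ t1) (h02 : t0 ≠ t2) (h12 : t1 ≠ t2) :
    ∀ x : V, x = t0 ∨ x = t1 ∨ x = t2 := by
  classical
  have hfull : ({t0, t1, t2} : Finset V) = Finset.univ := by
    apply Finset.eq_univ_of_card
    rw [Finset.card_insert_of_notMem (by simp [h01, h02]),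
        Finset.card_insert_of_notMem (by simp [h12]),
        Finset.card_singleton, hcard]
  intro x
  have : x ∈ ({t0, t1, t2} : Finset V) := hfull ▸ Finset.mem_univ x
  simpa using this

/-- If the minimal cycle length is 3, there are at least 4 vertices. -/
lemma L3_V [Fintype V] (Hni : ¬ HasIsolatedCycle tail head)
    {c : Fin 3 → E} (hc : IsElemCycle tail head c)
    (hmin : ∀ k, (∃ d : Fin (k + 1) → E, IsElemCycle tail head d) → 2 ≤ k) :
    4 ≤ Fintype.card V := by
  by_contra hlt
  push_neg at hlt
  have h3 : 3 ≤ Fintype.card V := by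
    have := elem_card_le (tail := tail) (head := head) hc
    omega
  have hcard : Fintype.card V = 3 := by omega
  obtain ⟨m, d, hd, had, j, l, hjl⟩ := get_witness Hni hc 0
  have hm2 : 2 ≤ m := hmin m ⟨d, hd⟩
  have hm2' : m + 1 ≤ 3 := hcard ▸ elem_card_le (tail := tail) (head := head) hd
  have hm : m = 2 := by omega
  subst hm
  -- distinct vertices of c
  have ht01 : tail (c 0) ≠ tail (c 1) := fun h => by
    have := hc.2 h; exact absurd this (by decide)
  have ht02 : tail (c 0) ≠ tail (c 2) := fun h => by
    have := hc.2 h; exact absurd this (by decide)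
  have ht12 : tail (c 1) ≠ tail (c 2) := fun h => by
    have := hc.2 h; exact absurd this (by decide)
  have huniv := all_eq_of_card3 hcard ht01 ht02 ht12
  -- l ≠ 0
  have hl : l = 1 ∨ l = 2 := by
    have hl0 : l ≠ 0 := by
      intro h
      rw [h] at hjl
      exact had j ⟨by rw [hjl], by rw [hjl]⟩
    have : ∀ l : Fin 3, l = 0 ∨ l = 1 ∨ l = 2 := by decide
    rcases this l with h | h | h
    · exact absurd h hl0
    · exact Or.inl h
    · exact Or.inr h
  have hj3 : j + 2 + 1 = j := by
    have : ∀ j : Fin 3, j + 2 + 1 = j := by decide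
    exact this j
  have hj12 : j + 1 + 1 = j + 2 := by
    have : ∀ j : Fin 3, j + 1 + 1 = j + 2 := by decide
    exact this j
  have hstep1 := hd.1 j           -- head (d j) = tail (d (j+1))
  have hstep2 := hd.1 (j + 1)     -- head (d (j+1)) = tail (d (j+1+1))
  have hstep3 := hd.1 (j + 2)     -- head (d (j+2)) = tail (d (j+2+1))
  rw [hj12] at hstep2
  rw [hj3] at hstep3
  have hne21 : j + 2 ≠ j + 1 := by
    have : ∀ j : Fin 3, j + 2 ≠ j + 1 := by decide
    exact this j
  have hne20 : j + 2 ≠ j := by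
    have : ∀ j : Fin 3, j + 2 ≠ j := by decide
    exact this j
  have hc0 : head (c 0) = tail (c 1) := by
    have := hc.1 0; rwa [show (0 : Fin 3) + 1 = 1 by decide] at this
  have hc1 : head (c 1) = tail (c 2) := by
    have := hc.1 1; rwa [show (1 : Fin 3) + 1 = 2 by decide] at this
  have hc2 : head (c 2) = tail (c 0) := by
    have := hc.1 2; rwa [show (2 : Fin 3) + 1 = 0 by decide] at this
  rcases hl with h | h
  · rw [h] at hjl   -- d j = c 1
    -- tail (d (j+1)) = tail (c 2)
    have ht1 : tail (d (j + 1)) = tail (c 2) := by rw [← hstep1, hjl, hc1]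
    -- x := tail (d (j+2)) differs from tail (c 1) and tail (c 2)
    have hx1 : tail (d (j + 2)) ≠ tail (c 1) := by
      intro hx
      have : tail (d (j + 2)) = tail (d j) := by rw [hx, hjl]
      exact hne20 (hd.2 this)
    have hx2 : tail (d (j + 2)) ≠ tail (c 2) := by
      intro hx
      have : tail (d (j + 2)) = tail (d (j + 1)) := by rw [hx, ht1]
      exact hne21 (hd.2 this)
    have hx0 : tail (d (j + 2)) = tail (c 0) := by
      rcases huniv (tail (d (j + 2))) with h' | h' | h'
      · exact h'
      · exact absurd h' hx1
      · exact absurd h' hx2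
    exact had (j + 2) ⟨hx0, by rw [hstep3, hjl, hc0]⟩
  · rw [h] at hjl   -- d j = c 2
    have ht1 : tail (d (j + 1)) = tail (c 0) := by rw [← hstep1, hjl, hc2]
    have hx1 : tail (d (j + 2)) ≠ tail (c 2) := by
      intro hx
      have : tail (d (j + 2)) = tail (d j) := by rw [hx, hjl]
      exact hne20 (hd.2 this)
    have hx2 : tail (d (j + 2)) ≠ tail (c 0) := by
      intro hx
      have : tail (d (j + 2)) = tail (d (j + 1)) := by rw [hx, ht1]
      exact hne21 (hd.2 this)
    have hx0 : tail (d (j + 2)) = tail (c 1) := by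
      rcases huniv (tail (d (j + 2))) with h' | h' | h'
      · exact absurd h' hx2
      · exact h'
      · exact absurd h' hx1
    -- the arc d (j+1) is parallel to c 0
    exact had (j + 1) ⟨ht1, by rw [hstep2, hx0, hc0]⟩
end MainL3

section MainL3E
variable {V E : Type*} {tail head : E → V}

/-- If the minimal cycle length is 3, there are at least 5 arcs. -/
lemma L3_E [Fintype E] (Hni : ¬ HasIsolatedCycle tail head)
    {c : Fin 3 → E} (hc : IsElemCycle tail head c)
    (hmin : ∀ k, (∃ d : Fin (k + 1) → E, IsElemCycle tail head d) → 2 ≤ k) :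
    5 ≤ Fintype.card E := by
  classical
  by_contra hlt
  push_neg at hlt
  have hE4 : Fintype.card E ≤ 4 := by omega
  obtain ⟨m, d, hd, had, j', l', hjl'⟩ := get_witness Hni hc 2
  -- an arc of d outside the range of c
  have hex : ∃ f, f ∈ Set.range d ∧ f ∉ Set.range c := by
    by_contra h
    push_neg at h
    have hsub : Set.range d ⊆ Set.range c := fun x hx => h x hx
    obtain ⟨k, hk⟩ := rot_lemma hc hd.1 hsub ⟨2, rfl⟩
    exact had k ⟨by rw [hk], by rw [hk]⟩
  obtain ⟨f, hfd, hfc⟩ := hex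
  have hcinj := elem_inj hc
  have hdinj := elem_inj hd
  have hc01 : c 0 ≠ c 1 := fun h => absurd (hcinj h) (by decide)
  have hc02 : c 0 ≠ c 2 := fun h => absurd (hcinj h) (by decide)
  have hc12 : c 1 ≠ c 2 := fun h => absurd (hcinj h) (by decide)
  have hf0 : c 0 ≠ f := fun h => hfc ⟨0, h⟩
  have hf1 : c 1 ≠ f := fun h => hfc ⟨1, h⟩
  have hf2 : c 2 ≠ f := fun h => hfc ⟨2, h⟩
  -- every arc is one of c 0, c 1, c 2, f
  have hclass : ∀ g : E, g = c 0 ∨ g = c 1 ∨ g = c 2 ∨ g = f := by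
    intro g
    by_contra hg
    push_neg at hg
    obtain ⟨hg0, hg1, hg2, hgf⟩ := hg
    have := card5_le hc01 hc02 hf0 (Ne.symm hg0) hc12 hf1 (Ne.symm hg1) hf2
      (Ne.symm hg2) (Ne.symm hgf)
    omega
  -- every arc of d is c 0, c 1 or f
  have hdval : ∀ k, d k = c 0 ∨ d k = c 1 ∨ d k = f := by
    intro k
    rcases hclass (d k) with h | h | h | h
    · exact Or.inl h
    · exact Or.inr (Or.inl h)
    · exact absurd (had k ⟨by rw [h], by rw [h]⟩) (by simp)
    · exact Or.inr (Or.inr h)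
  have hm2 : 2 ≤ m := hmin m ⟨d, hd⟩
  -- m + 1 ≤ 3 via embedding into {c 0, c 1, f}
  have hmle : m + 1 ≤ 3 := by
    have hφ : Function.Injective (fun k : Fin (m + 1) =>
        (⟨d k, by rcases hdval k with h | h | h <;> simp [h]⟩ :
          ({c 0, c 1, f} : Finset E))) := by
      intro a b hab
      exact hdinj (congrArg Subtype.val hab)
    have := Fintype.card_le_of_injective _ hφ
    rw [Fintype.card_fin, Fintype.card_coe] at this
    calc m + 1 ≤ ({c 0, c 1, f} : Finset E).card := this
      _ ≤ 2 + 1 := by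
          apply le_trans (Finset.card_insert_le _ _)
          simp [Finset.card_insert_le]
          have h1 := Finset.card_insert_le (c 1) ({f} : Finset E)
          rw [Finset.card_singleton] at h1
          omega
      _ = 3 := rfl
  have hm : m = 2 := by omega
  subst hm
  -- c 0 lies on d
  have hmem0 : ∃ k : Fin 3, d k = c 0 := by
    by_contra h
    push_neg at h
    have hφ : Function.Injective (fun k : Fin 3 =>
        (⟨d k, by
          rcases hdval k with h' | h' | h'
          · exact absurd h' (h k)
          · simp [h']
          · simp [h']⟩ : ({c 1, f} : Finset E))) := by
      intro a b hab
      exact hdinj (congrArg Subtype.val hab)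
    have := Fintype.card_le_of_injective _ hφ
    rw [Fintype.card_fin, Fintype.card_coe] at this
    have h2 : ({c 1, f} : Finset E).card ≤ 2 :=
      le_trans (Finset.card_insert_le _ _) (by simp)
    omega
  obtain ⟨j0, hj0⟩ := hmem0
  have hne10 : j0 + 1 ≠ j0 := by
    have : ∀ j : Fin 3, j + 1 ≠ j := by decide
    exact this j0
  have hne21 : j0 + 2 ≠ j0 + 1 := by
    have : ∀ j : Fin 3, j + 2 ≠ j + 1 := by decide
    exact this j0
  have hne20 : j0 + 2 ≠ j0 := by
    have : ∀ j : Fin 3, j + 2 ≠ j := by decide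
    exact this j0
  have hj12 : j0 + 1 + 1 = j0 + 2 := by
    have : ∀ j : Fin 3, j + 1 + 1 = j + 2 := by decide
    exact this j0
  have hj3 : j0 + 2 + 1 = j0 := by
    have : ∀ j : Fin 3, j + 2 + 1 = j := by decide
    exact this j0
  have hc0 : head (c 0) = tail (c 1) := by
    have := hc.1 0; rwa [show (0 : Fin 3) + 1 = 1 by decide] at this
  have hc1 : head (c 1) = tail (c 2) := by
    have := hc.1 1; rwa [show (1 : Fin 3) + 1 = 2 by decide] at this
  have hc2 : head (c 2) = tail (c 0) := by
    have := hc.1 2; rwa [show (2 : Fin 3) + 1 = 0 by decide] at this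
  have hstep1 := hd.1 j0           -- head (d j0) = tail (d (j0+1))
  have hstep2 := hd.1 (j0 + 1)
  have hstep3 := hd.1 (j0 + 2)
  rw [hj12] at hstep2
  rw [hj3] at hstep3
  -- d (j0+1) = c 1
  have hd1 : d (j0 + 1) = c 1 := by
    rcases hdval (j0 + 1) with h | h | h
    · exact absurd (hdinj (h.trans hj0.symm)) hne10
    · exact h
    · -- d (j0+1) = f; then c 1 = d (j0+2), contradiction on tails
      exfalso
      have hmem1 : ∃ k : Fin 3, d k = c 1 := by
        by_contra h1
        push_neg at h1
        have hφ : Function.Injective (fun k : Fin 3 =>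
            (⟨d k, by
              rcases hdval k with h' | h' | h'
              · simp [h']
              · exact absurd h' (h1 k)
              · simp [h']⟩ : ({c 0, f} : Finset E))) := by
          intro a b hab
          exact hdinj (congrArg Subtype.val hab)
        have := Fintype.card_le_of_injective _ hφ
        rw [Fintype.card_fin, Fintype.card_coe] at this
        have h2 : ({c 0, f} : Finset E).card ≤ 2 :=
          le_trans (Finset.card_insert_le _ _) (by simp)
        omega
      obtain ⟨k1, hk1⟩ := hmem1
      have hk1j0 : k1 ≠ j0 := fun h' => hc01 (by rw [← hj0, ← hk1, h'])
      have hk1j1 : k1 ≠ j0 + 1 := fun h' => hf1 (by rw [← hk1, h', h])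
      have hk1j2 : k1 = j0 + 2 := by
        have htri : ∀ j k : Fin 3, k = j ∨ k = j + 1 ∨ k = j + 2 := by decide
        rcases htri j0 k1 with h' | h' | h'
        · exact absurd h' hk1j0
        · exact absurd h' hk1j1
        · exact h'
      -- tails of d (j0+1) and d (j0+2) both equal tail (c 1)
      have ht1 : tail (d (j0 + 1)) = tail (c 1) := by rw [← hstep1, hj0, hc0]
      have ht2 : tail (d (j0 + 2)) = tail (c 1) := by rw [← hk1j2, hk1]
      exact hne21 (hd.2 (ht2.trans ht1.symm))
  -- d (j0+2) = f
  have hd2 : d (j0 + 2) = f := by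
    rcases hdval (j0 + 2) with h | h | h
    · exact absurd (hdinj (h.trans hj0.symm)) hne20
    · exact absurd (hdinj (h.trans hd1.symm)) hne21
    · exact h
  -- d (j0+2) is parallel to c 2: contradiction
  exact had (j0 + 2) ⟨by rw [← hstep2, hd1, hc1], by rw [hstep3, hj0, hc2]⟩

end MainL3E

theorem main_bound {V E : Type} [Fintype V] [Fintype E] (tail head : E → V)
    (Hc : ∃ (n : ℕ) (c : Fin (n + 1) → E), IsElemCycle tail head c)
    (Hni : ¬ HasIsolatedCycle tail head) :
    9 ≤ Fintype.card V + Fintype.card E := by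
  classical
  obtain ⟨n₀, hex, hmin⟩ : ∃ n, (∃ c : Fin (n + 1) → E, IsElemCycle tail head c) ∧
      ∀ k, (∃ c : Fin (k + 1) → E, IsElemCycle tail head c) → n ≤ k :=
    ⟨Nat.find Hc, Nat.find_spec Hc, fun k hk => Nat.find_min' Hc hk⟩
  rcases n₀ with _ | _ | _ | n
  · -- length 1: a loop, always isolated
    obtain ⟨c, hc⟩ := hex
    exact absurd (loop_isolated hc) Hni
  · -- length 2
    obtain ⟨c, hc⟩ := hex
    have huv : tail (c 0) ≠ tail (c 1) := fun h => absurd (hc.2 h) (by decide)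
    have hhc0 : head (c 0) = tail (c 1) := by
      have := hc.1 0; rwa [show (0 : Fin 2) + 1 = 1 by decide] at this
    have hhc1 : head (c 1) = tail (c 0) := by
      have := hc.1 1; rwa [show (1 : Fin 2) + 1 = 0 by decide] at this
    have WIT : ∀ i : Fin 2, ∃ (m : ℕ) (d : Fin (m + 1) → E), IsElemCycle tail head d ∧
        (∀ k, ¬ (tail (d k) = tail (c i) ∧ head (d k) = head (c i))) ∧
        (∃ j, d j = c (i + 1)) ∧ 2 ≤ m := by
      intro i
      obtain ⟨m, d, hd, had, j, l, hjl⟩ := get_witness Hni hc i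
      have hl : l = i + 1 := by
        have htri : ∀ i l : Fin 2, l = i ∨ l = i + 1 := by decide
        rcases htri i l with h | h
        · rw [h] at hjl
          exact absurd (had j ⟨by rw [hjl], by rw [hjl]⟩) (by simp)
        · exact h
      rw [hl] at hjl
      have hine : ∀ i : Fin 2, ¬ i = i + 1 := by decide
      have h211 : ∀ i : Fin 2, i + 1 + 1 = i := by decide
      have hii : tail (c i) ≠ tail (c (i + 1)) := by
        intro h
        exact hine i (hc.2 h)
      have hstepc : head (c (i + 1)) = tail (c i) := by
        have := hc.1 (i + 1)
        rwa [h211 i] at this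
      refine ⟨m, d, hd, had, ⟨j, hjl⟩, ?_⟩
      match m, d, hd, had, j, hjl with
      | 0, d, hd, had, j, hjl =>
        exfalso
        have h1 := hd.1 j
        rw [show j + 1 = j from by
          have h : ∀ j : Fin (0 + 1), j + 1 = j := by decide
          exact h j, hjl] at h1
        exact hii (by rw [← h1, hstepc])
      | 1, d, hd, had, j, hjl =>
        exfalso
        have h1 := hd.1 j
        have h2 := hd.1 (j + 1)
        rw [show j + 1 + 1 = j from by
          have : ∀ j : Fin 2, j + 1 + 1 = j := by decide
          exact this j, hjl] at h2
        rw [hjl] at h1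
        refine had (j + 1) ⟨by rw [← h1, hstepc], ?_⟩
        rw [h2]
        exact (hc.1 i).symm
      | (m + 2), d, hd, had, j, hjl => omega
    obtain ⟨m0, d, hd, had, ⟨j, hj⟩, hm0⟩ := WIT 0
    obtain ⟨m1, d', hd', had', ⟨j', hj'⟩, hm1⟩ := WIT 1
    by_cases hbig : 3 ≤ m0 ∨ 3 ≤ m1
    · rcases hbig with h | h
      · obtain ⟨m', rfl⟩ : ∃ m', m0 = m' + 3 := ⟨m0 - 3, by omega⟩
        have hE := L2_big hc hd had hj
        have hV := elem_card_le (tail := tail) (head := head) hd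
        omega
      · obtain ⟨m', rfl⟩ : ∃ m', m1 = m' + 3 := ⟨m1 - 3, by omega⟩
        have hE := L2_big hc hd' had' hj'
        have hV := elem_card_le (tail := tail) (head := head) hd'
        omega
    · push_neg at hbig
      have hm0' : m0 = 2 := by omega
      have hm1' : m1 = 2 := by omega
      subst hm0' hm1'
      have hV : 3 ≤ Fintype.card V := by
        have := elem_card_le (tail := tail) (head := head) hd
        omega
      obtain ⟨a, b, w, ha1, ha2, hb1, hb2, hw1, hw2⟩ := L2_small hc hd hj
      obtain ⟨p, q, w', hp1, hp2, hq1, hq2, hw1', hw2'⟩ := L2_small hc hd' hj'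
      rw [show (0 : Fin 2) + 1 = 1 by decide] at hb2 hw2
      rw [show (1 : Fin 2) + 1 = 0 by decide] at hq2 hw2'
      have hE : 6 ≤ Fintype.card E := by
        refine card6_le (a := c 0) (b := c 1) (x := a) (y := b) (z := p) (w := q)
          ?_ ?_ ?_ ?_ ?_ ?_ ?_ ?_ ?_ ?_ ?_ ?_ ?_ ?_ ?_
        · exact fun h => huv (congrArg tail h)
        · intro h; apply hw2; rw [← ha2, ← h, hhc0]
        · intro h; apply hw1; rw [← hb1, ← h]
        · intro h; apply huv; rw [← hp1, ← h]
        · intro h; apply hw2'; rw [← hq1, ← h]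
        · intro h; apply huv; rw [← ha1, ← h]
        · intro h; apply hw2; rw [← hb1, ← h]
        · intro h; apply hw2'; rw [← hp2, ← h, hhc1]
        · intro h; apply hw1'; rw [← hq1, ← h]
        · intro h; apply hw1; rw [← hb1, ← h, ha1]
        · intro h; apply huv; rw [← ha1, h, hp1]
        · intro h; apply hw2'; rw [← hq1, ← h, ha1]
        · intro h; apply hw2; rw [← hb1, h, hp1]
        · intro h; apply huv; rw [← hq2, ← h, hb2]
        · intro h; apply hw1'; rw [← hq1, ← h, hp1]
      omega
  · -- length 3
    obtain ⟨c, hc⟩ := hex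
    have h4 := L3_V Hni hc (fun k hk => hmin k hk)
    have h5 := L3_E Hni hc (fun k hk => hmin k hk)
    omega
  · -- length ≥ 4
    obtain ⟨c, hc⟩ := hex
    have hV : n + 4 ≤ Fintype.card V := by
      have := elem_card_le (tail := tail) (head := head) hc
      omega
    obtain ⟨m, d, hd, had, j, l, hjl⟩ := get_witness Hni hc 0
    have hex2 : ∃ f, f ∈ Set.range d ∧ f ∉ Set.range c := by
      by_contra h
      push_neg at h
      have hsub : Set.range d ⊆ Set.range c := fun x hx => h x hx
      obtain ⟨k, hk⟩ := rot_lemma hc hd.1 hsub ⟨0, rfl⟩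
      exact had k ⟨by rw [hk], by rw [hk]⟩
    obtain ⟨f, hf1, hf2⟩ := hex2
    have hE : n + 5 ≤ Fintype.card E := by
      have h1 : (Finset.univ.image c).card = n + 4 := by
        rw [Finset.card_image_of_injective _ (elem_inj hc), Finset.card_univ,
          Fintype.card_fin]
      have hfnot : f ∉ Finset.univ.image c := by
        simp only [Finset.mem_image]
        rintro ⟨i, -, hi⟩
        exact hf2 ⟨i, hi⟩
      have h2 : (insert f (Finset.univ.image c)).card = n + 5 := by
        rw [Finset.card_insert_of_notMem hfnot, h1]
      calc n + 5 = (insert f (Finset.univ.image c)).card := h2.symm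
        _ ≤ Fintype.card E := Finset.card_le_univ _
    omega



/-- Arc type of the complete digraph `D₃` on three vertices. -/
def D3E := {p : Fin 3 × Fin 3 // p.1 ≠ p.2}

instance : Fintype D3E := by unfold D3E; infer_instance

def d3tail : D3E → Fin 3 := fun e => e.val.1
def d3head : D3E → Fin 3 := fun e => e.val.2

lemma d3_card : Fintype.card D3E = 6 := by decide

def a01 : D3E := ⟨(0, 1), by decide⟩
def a10 : D3E := ⟨(1, 0), by decide⟩

lemma d3_cycle : ∃ (n : ℕ) (c : Fin (n + 1) → D3E), IsElemCycle d3tail d3head c := by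
  refine ⟨1, ![a01, a10], ?_, ?_⟩
  · intro i
    fin_cases i <;> rfl
  · intro a b h
    fin_cases a <;> fin_cases b <;>
      first
      | rfl
      | exact absurd h (by decide)

lemma d3_no_iso : ¬ HasIsolatedCycle d3tail d3head := by
  rintro ⟨n, c, hc, ⟨⟨u, v⟩, huv⟩, ⟨i0, hi0⟩, hiso⟩
  simp only [ne_eq] at huv
  have hn : n + 1 ≤ 3 := by
    have := elem_card_le (tail := d3tail) (head := d3head) hc
    simpa using this
  rcases n with _ | _ | _ | n
  · -- loop: impossible
    have h := hc.1 i0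
    rw [show i0 + 1 = i0 from by
      have h2 : ∀ j : Fin (0 + 1), j + 1 = j := by decide
      exact h2 i0, hi0] at h
    exact huv h.symm
  · -- 2-cycle
    have h1 : d3tail (c (i0 + 1)) = v := by
      rw [← hc.1 i0, hi0]; rfl
    have h2 : d3head (c (i0 + 1)) = u := by
      have h3 := hc.1 (i0 + 1)
      rw [show i0 + 1 + 1 = i0 from by
        have h4 : ∀ j : Fin (1 + 1), j + 1 + 1 = j := by decide
        exact h4 i0, hi0] at h3
      exact h3
    have hfeq : c (i0 + 1) = ⟨(v, u), fun h => huv h.symm⟩ :=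
      Subtype.ext (Prod.ext h1 h2)
    have hwfacts : ∀ a b : Fin 3, a ≠ b → -(a + b) ≠ a ∧ -(a + b) ≠ b := by decide
    set w : Fin 3 := -(u + v) with hw
    have hwu : w ≠ u := (hwfacts u v huv).1
    have hwv : w ≠ v := (hwfacts u v huv).2
    have hdisj := hiso 2 ![⟨(v, u), fun h => huv h.symm⟩, ⟨(u, w), fun h => hwu h.symm⟩,
        ⟨(w, v), hwv⟩] ⟨?_, ?_⟩ ?_
    · exact Set.disjoint_left.mp hdisj ⟨i0 + 1, rfl⟩ ⟨0, hfeq.symm⟩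
    · intro i
      fin_cases i <;> rfl
    · intro a b h
      fin_cases a <;> fin_cases b <;>
        first
        | rfl
        | exact absurd h (fun hh => huv hh.symm)
        | exact absurd h huv
        | exact absurd h (fun hh => hwu hh.symm)
        | exact absurd h hwu
        | exact absurd h (fun hh => hwv hh.symm)
        | exact absurd h hwv
    · intro i
      fin_cases i
      · rintro ⟨hh1, -⟩
        exact huv (hh1 : v = u).symm
      · rintro ⟨-, hh2⟩
        exact hwv (hh2 : w = v)
      · rintro ⟨hh1, -⟩
        exact hwu (hh1 : w = u)
  · -- 3-cycle
    have htinj := hc.2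
    have idx1 : ∀ j : Fin (2 + 1), j + 1 ≠ j := by decide
    have idx2 : ∀ j : Fin (2 + 1), j + 2 ≠ j := by decide
    have idx21 : ∀ j : Fin (2 + 1), j + 2 ≠ j + 1 := by decide
    have idx11 : ∀ j : Fin (2 + 1), j + 1 + 1 = j + 2 := by decide
    have hne1 : d3tail (c (i0 + 1)) ≠ d3tail (c i0) :=
      fun h => idx1 i0 (htinj h)
    have hne2 : d3tail (c (i0 + 2)) ≠ d3tail (c i0) :=
      fun h => idx2 i0 (htinj h)
    have hne21 : d3tail (c (i0 + 2)) ≠ d3tail (c (i0 + 1)) :=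
      fun h => idx21 i0 (htinj h)
    have hstep1 : d3head (c (i0 + 1)) = d3tail (c (i0 + 2)) := by
      have h3 := hc.1 (i0 + 1)
      rwa [idx11 i0] at h3
    have hdisj := hiso 1 ![c (i0 + 1),
        ⟨(d3tail (c (i0 + 2)), d3tail (c (i0 + 1))), hne21⟩] ⟨?_, ?_⟩ ?_
    · exact Set.disjoint_left.mp hdisj ⟨i0 + 1, rfl⟩ ⟨0, rfl⟩
    · intro i
      fin_cases i
      · exact hstep1
      · rfl
    · intro a b h
      fin_cases a <;> fin_cases b <;>
        first
        | rfl
        | exact absurd h hne21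
        | exact absurd h (fun hh => hne21 hh.symm)
    · have htu : d3tail (c i0) = u := by rw [hi0]; rfl
      intro i
      fin_cases i
      · rintro ⟨hh1, -⟩
        exact hne1 (hh1.trans htu.symm)
      · rintro ⟨hh1, -⟩
        exact hne2 (hh1.trans htu.symm)
  · omega

/-- Any digraph with at least one directed (elementary) cycle but no isolated cycle
satisfies `|V| + |E| ≥ 9`, and the complete digraph `D₃` (with `|V| = 3`, `|E| = 6`)
attains this bound: it has a cycle but no isolated cycle. -/
theorem smallest_graph_without_isolated_cycles :
    (∀ (V' E' : Type) [Fintype V'] [Fintype E'] (tail head : E' → V'),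
      (∃ (n : ℕ) (c : Fin (n + 1) → E'), IsElemCycle tail head c) →
      ¬ HasIsolatedCycle tail head →
      9 ≤ Fintype.card V' + Fintype.card E') ∧
    Fintype.card (Fin 3) = 3 ∧ Fintype.card D3E = 6 ∧
    (∃ (n : ℕ) (c : Fin (n + 1) → D3E), IsElemCycle d3tail d3head c) ∧
    ¬ HasIsolatedCycle d3tail d3head := by
  exact ⟨fun V' E' _ _ tail head hc hni => main_bound tail head hc hni,
    by simp, d3_card, d3_cycle, d3_no_iso⟩
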